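/- arXiv:2312.09331 — 7 statements merged into one kernel-verified Lean document; each statement's English description precedes it below -/
import Mathlib

section
/- Let $Q$ be a full conjunctive query with atoms $R_1(\bm X_1),\ldots,R_k(\bm X_k)$ and let $(\lambda_i)_{i\in[k]}$ be a fractional edge cover of $Q$, i.e., nonnegative reals such that for every variable $X$ of $Q$, the sum of $\lambda_i$ over all atoms containing $X$ is at least $1$. For a single variable $Y$ of $Q$ and a value $y$, let $R_i \ltimes y$ denote $R_i$ if $Y \notin \bm X_i$ and $\sigma_{Y=y} R_i$ otherwise. Then $\sum_{y} \prod_{i\in[k]} |R_i \ltimes y|^{\lambda_i} \le \prod_{i\in[k]} |R_i|^{\lambda_i}$, where the sum ranges over the active domain of $Y$. -/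
open Finset MeasureTheory

/-- Finite multivariate Hölder in `ℝ≥0∞`, exponents summing to 1. -/
lemma holder_ennreal {ι V : Type*} [Fintype V] (s : Finset ι)
    (f : ι → V → ENNReal) (p : ι → ℝ) (hp : ∑ i ∈ s, p i = 1)
    (h2p : ∀ i ∈ s, 0 ≤ p i) :
    ∑ y : V, ∏ i ∈ s, f i y ^ p i ≤ ∏ i ∈ s, (∑ y : V, f i y) ^ p i := by
  letI : MeasurableSpace V := ⊤
  have hm : ∀ g : V → ENNReal, Measurable g := fun g => measurable_from_top
  have := ENNReal.lintegral_prod_norm_pow_le (μ := Measure.count) s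
    (f := f) (fun i _ => (hm (f i)).aemeasurable) hp h2p
  simpa [MeasureTheory.lintegral_count, tsum_fintype] using this

/-- Finite multivariate Hölder in `ℝ`, exponents summing to 1. -/
lemma holder_real {ι V : Type*} [Fintype V] (s : Finset ι)
    (f : ι → V → ℝ) (hf : ∀ i y, 0 ≤ f i y) (p : ι → ℝ) (hp : ∑ i ∈ s, p i = 1)
    (h2p : ∀ i ∈ s, 0 ≤ p i) :
    ∑ y : V, ∏ i ∈ s, f i y ^ p i ≤ ∏ i ∈ s, (∑ y : V, f i y) ^ p i := by
  have key := holder_ennreal s (fun i y => ENNReal.ofReal (f i y)) p hp h2p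
  have hb : 0 ≤ ∏ i ∈ s, (∑ y : V, f i y) ^ p i :=
    Finset.prod_nonneg fun i _ =>
      Real.rpow_nonneg (Finset.sum_nonneg fun y _ => hf i y) _
  rw [← ENNReal.ofReal_le_ofReal_iff hb]
  calc ENNReal.ofReal (∑ y : V, ∏ i ∈ s, f i y ^ p i)
      = ∑ y : V, ∏ i ∈ s, ENNReal.ofReal (f i y) ^ p i := by
        rw [ENNReal.ofReal_sum_of_nonneg (fun y _ =>
          Finset.prod_nonneg fun i _ => Real.rpow_nonneg (hf i y) _)]
        refine Finset.sum_congr rfl fun y _ => ?_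
        rw [ENNReal.ofReal_prod_of_nonneg (fun i _ => Real.rpow_nonneg (hf i y) _)]
        refine Finset.prod_congr rfl fun i hi => ?_
        rw [ENNReal.ofReal_rpow_of_nonneg (hf i y) (h2p i hi)]
    _ ≤ ∏ i ∈ s, (∑ y : V, ENNReal.ofReal (f i y)) ^ p i := key
    _ = ENNReal.ofReal (∏ i ∈ s, (∑ y : V, f i y) ^ p i) := by
        rw [ENNReal.ofReal_prod_of_nonneg (fun i _ =>
          Real.rpow_nonneg (Finset.sum_nonneg fun y _ => hf i y) _)]
        refine (Finset.prod_congr rfl fun i hi => ?_).symm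
        rw [← ENNReal.ofReal_sum_of_nonneg (fun y _ => hf i y),
          ENNReal.ofReal_rpow_of_nonneg (Finset.sum_nonneg fun y _ => hf i y) (h2p i hi)]

/-- `∑ a^L ≤ (∑ a)^L` for `L ≥ 1`, nonneg terms. -/
lemma sum_rpow_le {V : Type*} [Fintype V] (a : V → ℝ) (ha : ∀ y, 0 ≤ a y)
    {L : ℝ} (hL : 1 ≤ L) : ∑ y : V, a y ^ L ≤ (∑ y : V, a y) ^ L := by
  have hS : ∀ y, a y ≤ ∑ y : V, a y := fun y =>
    Finset.single_le_sum (fun y _ => ha y) (Finset.mem_univ y)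
  have hS0 : 0 ≤ ∑ y : V, a y := Finset.sum_nonneg fun y _ => ha y
  calc ∑ y : V, a y ^ L ≤ ∑ y : V, a y * (∑ y : V, a y) ^ (L - 1) := by
        refine Finset.sum_le_sum fun y _ => ?_
        calc a y ^ L = a y ^ (1 + (L - 1)) := by ring_nf
          _ = a y * a y ^ (L - 1) := by
              rw [Real.rpow_add' (ha y) (by linarith), Real.rpow_one]
          _ ≤ a y * (∑ y : V, a y) ^ (L - 1) := by
              have := Real.rpow_le_rpow (ha y) (hS y) (by linarith : (0:ℝ) ≤ L - 1)
              exact mul_le_mul_of_nonneg_left this (ha y)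
    _ = (∑ y : V, a y) ^ L := by
        rw [← Finset.sum_mul, ← Real.rpow_one_add' hS0 (by linarith)]
        ring_nf


/-- **Query decomposition lemma, single-variable case (Hölder step).**
A query has `k` atoms; atom `i` has tuple type `T i` and relation `R i`.
`hasY i` says variable `Y` occurs in atom `i`, in which case `proj i`
extracts the `Y`-value of a tuple. The semijoin `R i ⋉ y` is `R i` itself
when `Y` does not occur in atom `i`, and the selection `σ_{Y=y} (R i)`
otherwise. Given a fractional edge cover restricted to the variable `Y`
(the weights of the atoms containing `Y` sum to at least 1),
the sum over all values `y` of the products of the semijoin cardinalities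
raised to the weights is at most the product of the full cardinalities
raised to the weights. -/
theorem stmt_0 {k : ℕ} {V : Type*} [Fintype V] [DecidableEq V]
    (T : Fin k → Type*) [∀ i, DecidableEq (T i)]
    (R : (i : Fin k) → Finset (T i))
    (hasY : Fin k → Prop) [DecidablePred hasY]
    (proj : (i : Fin k) → hasY i → T i → V)
    (lam : Fin k → ℝ) (hlam : ∀ i, 0 ≤ lam i)
    (hcover : 1 ≤ ∑ i ∈ Finset.univ.filter (fun i => hasY i), lam i) :
    ∑ y : V, ∏ i : Fin k,
      (((if h : hasY i then ((R i).filter (fun t => proj i h t = y)).card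
         else (R i).card) : ℝ) ^ lam i)
    ≤ ∏ i : Fin k, ((R i).card : ℝ) ^ lam i := by
  classical
  set S : Finset (Fin k) := Finset.univ.filter (fun i => hasY i) with hS
  set a : Fin k → V → ℝ := fun i y =>
    if h : hasY i then (((R i).filter (fun t => proj i h t = y)).card : ℝ)
      else ((R i).card : ℝ) with ha
  have ha0 : ∀ i y, 0 ≤ a i y := by
    intro i y
    by_cases h : hasY i <;> simp [ha, h]
  set L : ℝ := ∑ i ∈ S, lam i with hL
  have hL1 : (1:ℝ) ≤ L := hcover
  have hL0 : (0:ℝ) < L := lt_of_lt_of_le one_pos hL1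
  have hexp : ∀ (i : Fin k) (x : ℝ), 0 ≤ x → (x ^ L) ^ (lam i / L) = x ^ lam i := by
    intro i x hx
    rw [← Real.rpow_mul hx]
    congr 1
    field_simp
  have hsplit : ∀ y : V, ∏ i : Fin k, a i y ^ lam i
      = (∏ i ∈ S, a i y ^ lam i) * ∏ i ∈ Finset.univ.filter (fun i => ¬ hasY i),
          ((R i).card : ℝ) ^ lam i := by
    intro y
    rw [← Finset.prod_filter_mul_prod_filter_not Finset.univ (fun i => hasY i)]
    congr 1
    refine Finset.prod_congr rfl fun i hi => ?_
    have h : ¬ hasY i := by simpa using (Finset.mem_filter.mp hi).2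
    simp [ha, h]
  have hfiber : ∀ i ∈ S, ∑ y : V, a i y = ((R i).card : ℝ) := by
    intro i hi
    have h : hasY i := by simpa [hS] using (Finset.mem_filter.mp hi).2
    have hc := Finset.card_eq_sum_card_fiberwise
      (f := fun t => proj i h t) (s := R i) (t := Finset.univ)
      (fun x _ => Finset.mem_univ _)
    simp only [ha, dif_pos h]
    rw [hc]
    norm_cast
  have hp : ∑ i ∈ S, lam i / L = 1 := by
    rw [← Finset.sum_div, ← hL, div_self hL0.ne']
  have h2p : ∀ i ∈ S, 0 ≤ lam i / L := fun i _ => div_nonneg (hlam i) hL0.le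
  have key := holder_real S (fun i y => a i y ^ L)
    (fun i y => Real.rpow_nonneg (ha0 i y) _) (fun i => lam i / L) hp h2p
  have main : ∑ y : V, ∏ i ∈ S, a i y ^ lam i ≤ ∏ i ∈ S, ((R i).card : ℝ) ^ lam i := by
    calc ∑ y : V, ∏ i ∈ S, a i y ^ lam i
        = ∑ y : V, ∏ i ∈ S, (a i y ^ L) ^ (lam i / L) := by
          refine Finset.sum_congr rfl fun y _ => Finset.prod_congr rfl fun i _ => ?_
          rw [hexp i _ (ha0 i y)]
      _ ≤ ∏ i ∈ S, (∑ y : V, a i y ^ L) ^ (lam i / L) := key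
      _ ≤ ∏ i ∈ S, ((∑ y : V, a i y) ^ L) ^ (lam i / L) := by
          refine Finset.prod_le_prod (fun i _ => Real.rpow_nonneg
            (Finset.sum_nonneg fun y _ => Real.rpow_nonneg (ha0 i y) _) _)
            (fun i hi => ?_)
          exact Real.rpow_le_rpow
            (Finset.sum_nonneg fun y _ => Real.rpow_nonneg (ha0 i y) _)
            (sum_rpow_le (a i) (ha0 i) hL1) (h2p i hi)
      _ = ∏ i ∈ S, ((R i).card : ℝ) ^ lam i := by
          refine Finset.prod_congr rfl fun i hi => ?_
          rw [hfiber i hi, hexp i _ (Nat.cast_nonneg _)]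
  calc ∑ y : V, ∏ i : Fin k, a i y ^ lam i
      = (∑ y : V, ∏ i ∈ S, a i y ^ lam i) *
        ∏ i ∈ Finset.univ.filter (fun i => ¬ hasY i), ((R i).card : ℝ) ^ lam i := by
        simp_rw [hsplit]
        rw [Finset.sum_mul]
    _ ≤ (∏ i ∈ S, ((R i).card : ℝ) ^ lam i) *
        ∏ i ∈ Finset.univ.filter (fun i => ¬ hasY i), ((R i).card : ℝ) ^ lam i := by
        refine mul_le_mul_of_nonneg_right main ?_
        exact Finset.prod_nonneg fun i _ => Real.rpow_nonneg (Nat.cast_nonneg _) _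
    _ = ∏ i : Fin k, ((R i).card : ℝ) ^ lam i :=
        Finset.prod_filter_mul_prod_filter_not Finset.univ (fun i => hasY i) _
end

section
/- Let $R \subseteq A \times B$, $S \subseteq B \times C$, $T \subseteq A \times C$ be finite binary relations over finite types. Then $\sum_{(a,b)\in R} \sqrt{|\{c : (b,c)\in S\}| \cdot |\{c : (a,c)\in T\}|} \le \sqrt{|R|\cdot|S|\cdot|T|}$. -/
/-- **Query decomposition lemma for the triangle query** with fractional edge
cover `(1/2, 1/2, 1/2)`: for finite binary relations `R ⊆ A × B`, `S ⊆ B × C`,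
`T ⊆ A × C`,
`∑_{(a,b)∈R} √(|{c : (b,c)∈S}| ⋅ |{c : (a,c)∈T}|) ≤ √(|R|⋅|S|⋅|T|)`. -/
theorem stmt_1 {A B C : Type*} [Fintype A] [Fintype B] [Fintype C]
    [DecidableEq A] [DecidableEq B] [DecidableEq C]
    (R : Finset (A × B)) (S : Finset (B × C)) (T : Finset (A × C)) :
    ∑ p ∈ R, Real.sqrt (((S.filter (fun q => q.1 = p.2)).card : ℝ) *
                        ((T.filter (fun q => q.1 = p.1)).card : ℝ))
    ≤ Real.sqrt ((R.card : ℝ) * (S.card : ℝ) * (T.card : ℝ)) := by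
  set f : A × B → ℝ := fun p => ((S.filter (fun q => q.1 = p.2)).card : ℝ) with hf
  set g : A × B → ℝ := fun p => ((T.filter (fun q => q.1 = p.1)).card : ℝ) with hg
  have hsum : ∑ p ∈ R, f p * g p ≤ (S.card : ℝ) * (T.card : ℝ) := by
    have h1 : ∑ p ∈ R, f p * g p ≤ ∑ p ∈ (Finset.univ : Finset (A × B)), f p * g p := by
      apply Finset.sum_le_sum_of_subset_of_nonneg (Finset.subset_univ R)
      intro i _ _
      positivity
    calc ∑ p ∈ R, f p * g p ≤ ∑ p ∈ (Finset.univ : Finset (A × B)), f p * g p := h1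
      _ = (∑ b : B, ((S.filter (fun q => q.1 = b)).card : ℝ)) *
          (∑ a : A, ((T.filter (fun q => q.1 = a)).card : ℝ)) := by
          rw [Finset.sum_mul_sum]
          rw [← Finset.univ_product_univ, Finset.sum_product]
          simp only [hf, hg]
          exact Finset.sum_comm
      _ = (S.card : ℝ) * (T.card : ℝ) := by
          congr 1
          · rw [← Nat.cast_sum]
            congr 1
            exact (Finset.card_eq_sum_card_fiberwise (fun x _ => Finset.mem_univ x.1)).symm
          · rw [← Nat.cast_sum]
            congr 1
            exact (Finset.card_eq_sum_card_fiberwise (fun x _ => Finset.mem_univ x.1)).symm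
  have hL : (∑ p ∈ R, Real.sqrt (f p * g p)) ^ 2 ≤
      (R.card : ℝ) * ((S.card : ℝ) * (T.card : ℝ)) := by
    have h2 := Finset.sum_mul_sq_le_sq_mul_sq R (fun _ => (1:ℝ))
      (fun p => Real.sqrt (f p * g p))
    simp only [one_mul, one_pow, Finset.sum_const, nsmul_eq_mul, mul_one] at h2
    calc (∑ p ∈ R, Real.sqrt (f p * g p)) ^ 2
        ≤ (R.card : ℝ) * ∑ p ∈ R, Real.sqrt (f p * g p) ^ 2 := h2
      _ = (R.card : ℝ) * ∑ p ∈ R, f p * g p := by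
          congr 1
          refine Finset.sum_congr rfl fun p _ => Real.sq_sqrt ?_
          positivity
      _ ≤ (R.card : ℝ) * ((S.card : ℝ) * (T.card : ℝ)) := by
          apply mul_le_mul_of_nonneg_left hsum (by positivity)
  have hnn : 0 ≤ ∑ p ∈ R, Real.sqrt (f p * g p) :=
    Finset.sum_nonneg fun i _ => Real.sqrt_nonneg _
  have := (Real.le_sqrt (y := (R.card : ℝ) * (S.card : ℝ) * (T.card : ℝ)) hnn
    (by positivity)).mpr (by rw [mul_assoc]; exact hL)
  simpa [hf, hg] using this
end

section
/- Let $N = 2^n$ and let $[\alpha,\beta] \subseteq [N]$ be a discrete interval with $\alpha \le \beta$. If the canonical partition $\mathrm{CP}_N([\alpha,\beta])$ contains a singleton interval $[x,x]$, then $x = \alpha$ or $x = \beta$. -/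
/-- The numeric value of a bitstring (most significant bit first). -/
def bitsVal (b : List Bool) : ℕ :=
  b.foldl (fun acc x => 2 * acc + (if x then 1 else 0)) 0

/-- The node of the segment tree `𝒯_N` (`N = 2^n`) identified by the bitstring
`b` (root = empty string, children of `b` are `b0` and `b1`): the aligned
dyadic subinterval of `[1, 2^n]` of length `2^(n - |b|)` with index `bitsVal b`. -/
def seg (n : ℕ) (b : List Bool) : Finset ℕ :=
  Finset.Icc (bitsVal b * 2 ^ (n - b.length) + 1)
             ((bitsVal b + 1) * 2 ^ (n - b.length))

/-- The canonical partition `CP_N([α,β])` (`N = 2^n`) of the discrete interval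
`[α,β] ⊆ [N]`: the set of maximal segment-tree nodes contained in `[α,β]`,
i.e. nodes `b` with `seg n b ⊆ [α,β]` such that either `b` is the root or the
parent of `b` (obtained by dropping the last bit) is not contained in `[α,β]`. -/
def CP (n α β : ℕ) : Set (List Bool) :=
  {b | b.length ≤ n ∧ seg n b ⊆ Finset.Icc α β ∧
       (b = [] ∨ ¬ seg n b.dropLast ⊆ Finset.Icc α β)}

lemma bitsVal_concat (l : List Bool) (c : Bool) :
    bitsVal (l ++ [c]) = 2 * bitsVal l + (if c then 1 else 0) := by
  simp [bitsVal]

/-- **Singletons in a canonical partition are endpoints**: if the canonical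
partition `CP_N([α,β])` (for `[α,β] ⊆ [1, 2^n]`, `α ≤ β`) contains a node whose
segment is a singleton interval `[x,x]`, then `x = α` or `x = β`. -/
theorem stmt_6 (n α β x : ℕ) (hα : 1 ≤ α) (hαβ : α ≤ β) (hβ : β ≤ 2 ^ n)
    (b : List Bool) (hb : b ∈ CP n α β) (hx : seg n b = {x}) :
    x = α ∨ x = β := by
  obtain ⟨hlen, hsub, hroot⟩ := hb
  have hxmem : x ∈ Finset.Icc α β := hsub (hx ▸ Finset.mem_singleton_self x)
  rw [Finset.mem_Icc] at hxmem
  rw [seg, Finset.Icc_eq_singleton_iff] at hx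
  obtain ⟨hx1, hx2⟩ := hx
  have hmul : (bitsVal b + 1) * 2 ^ (n - b.length)
      = bitsVal b * 2 ^ (n - b.length) + 2 ^ (n - b.length) := by ring
  have hp1 : 2 ^ (n - b.length) = 1 := by omega
  rw [hp1, mul_one] at hx1 hx2
  have hnb : n - b.length = 0 := by
    by_contra h
    have : 2 ≤ 2 ^ (n - b.length) := Nat.one_lt_two_pow (by omega)
    omega
  have hbn : b.length = n := by omega
  rcases hroot with rfl | hpar
  · -- b = [], so n = 0, 2^n = 1
    simp at hbn
    subst hbn
    simp [bitsVal] at hx2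
    norm_num at hβ
    omega
  · have hbne : b ≠ [] := by
      rintro rfl
      exact hpar (by simpa using hsub)
    obtain ⟨l, c, rfl⟩ : ∃ l c, l ++ [c] = b :=
      ⟨b.dropLast, b.getLast hbne, List.dropLast_append_getLast hbne⟩
    have hdrop : (l ++ [c]).dropLast = l := by simp
    rw [hdrop] at hpar
    have hllen : l.length = n - 1 := by simp at hbn; omega
    have hn1 : 1 ≤ n := by simp at hbn; omega
    have hpow : 2 ^ (n - l.length) = 2 := by 
      have h1 : n - l.length = 1 := by omega
      rw [h1, pow_one]
    rw [bitsVal_concat] at hx2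
    set w := bitsVal l with hw
    -- parent segment is Icc (2w+1) (2w+2), not contained
    rw [Finset.not_subset] at hpar
    obtain ⟨y, hy, hyn⟩ := hpar
    rw [seg, hpow, Finset.mem_Icc] at hy
    rw [Finset.mem_Icc] at hyn
    cases c <;> simp at hx2 <;> omega
end

section
/- Let $N = 2^n$ and let $x_1,\ldots,x_k \subseteq [N]$ be discrete intervals. Then $\bigcap_{i\in[k]} x_i \neq \emptyset$ if and only if there exist a permutation $\sigma$ of $[k]$ and bitstrings $b_1,\ldots,b_k$ such that for every $j \in [k]$, the concatenation $b_1 \circ \cdots \circ b_j$ (viewed as a node of the segment tree $\mathcal{T}_N$) belongs to the canonical partition $\mathrm{CP}_N(x_{\sigma_j})$. -/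
/-- The concatenation `b (σ 1) ∘ ⋯ ∘ b (σ j)` of the first `j+1` bitstrings
(in index order of `Fin k`). -/
def concatTo {k : ℕ} (b : Fin k → List Bool) (j : Fin k) : List Bool :=
  (((List.finRange k).take (j.1 + 1)).map b).flatten

lemma foldl_bitsVal (s : List Bool) (a : ℕ) :
    s.foldl (fun acc x => 2 * acc + (if x then 1 else 0)) a
      = a * 2 ^ s.length + bitsVal s := by
  induction s generalizing a with
  | nil => simp [bitsVal]
  | cons x s ih =>
    simp only [List.foldl_cons, List.length_cons, bitsVal]
    rw [ih, ih (2 * 0 + _)]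
    ring

lemma bitsVal_append (p s : List Bool) :
    bitsVal (p ++ s) = bitsVal p * 2 ^ s.length + bitsVal s := by
  unfold bitsVal
  rw [List.foldl_append, foldl_bitsVal]; rfl

lemma bitsVal_lt (b : List Bool) : bitsVal b < 2 ^ b.length := by
  induction b with
  | nil => simp [bitsVal]
  | cons x s ih =>
    show List.foldl _ _ (x :: s) < _
    rw [List.foldl_cons, foldl_bitsVal, List.length_cons, pow_succ]
    rcases x <;> simp <;> omega

lemma seg_append_subset {n : ℕ} (p s : List Bool) (h : p.length + s.length ≤ n) :
    seg n (p ++ s) ⊆ seg n p := by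
  have hv := bitsVal_lt s
  intro t ht
  simp only [seg, Finset.mem_Icc, bitsVal_append, List.length_append] at ht ⊢
  have h2 : 2 ^ (n - p.length) = 2 ^ s.length * 2 ^ (n - (p.length + s.length)) := by
    rw [← pow_add]; congr 1; omega
  constructor
  · calc bitsVal p * 2 ^ (n - p.length) + 1
        = bitsVal p * 2 ^ s.length * 2 ^ (n - (p.length + s.length)) + 1 := by
          rw [h2, mul_assoc]
      _ ≤ (bitsVal p * 2 ^ s.length + bitsVal s) * 2 ^ (n - (p.length + s.length)) + 1 := by
          have := Nat.mul_le_mul_right (2 ^ (n - (p.length + s.length)))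
            (Nat.le_add_right (bitsVal p * 2 ^ s.length) (bitsVal s))
          omega
      _ ≤ t := ht.1
  · calc t ≤ (bitsVal p * 2 ^ s.length + bitsVal s + 1) * 2 ^ (n - (p.length + s.length)) := ht.2
      _ ≤ (bitsVal p * 2 ^ s.length + 2 ^ s.length) * 2 ^ (n - (p.length + s.length)) := by
          apply Nat.mul_le_mul_right; omega
      _ = (bitsVal p + 1) * 2 ^ (n - p.length) := by rw [h2]; ring

lemma seg_nonempty {n : ℕ} (b : List Bool) : (seg n b).Nonempty := by
  refine ⟨bitsVal b * 2 ^ (n - b.length) + 1, ?_⟩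
  simp only [seg, Finset.mem_Icc]
  have : 1 ≤ 2 ^ (n - b.length) := Nat.one_le_two_pow
  constructor
  · omega
  · have : (bitsVal b) * 2 ^ (n - b.length) + 1 * 2 ^ (n - b.length)
        ≤ (bitsVal b + 1) * 2 ^ (n - b.length) := by ring_nf; omega
    omega

/-- binary digits, length `d`, of `m % 2^d`, MSB first. -/
def bits : ℕ → ℕ → List Bool
  | 0, _ => []
  | d + 1, m => bits d (m / 2) ++ [m % 2 == 1]

lemma bits_length (d m : ℕ) : (bits d m).length = d := by
  induction d generalizing m with
  | zero => rfl
  | succ d ih => simp [bits, ih]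

lemma bitsVal_bits (d m : ℕ) : bitsVal (bits d m) = m % 2 ^ d := by
  induction d generalizing m with
  | zero => simp [bits, bitsVal, Nat.mod_one]
  | succ d ih =>
    rw [bits, bitsVal_append, ih, pow_succ, Nat.mul_comm (2^d) 2, Nat.mod_mul]
    have h2 : m % 2 = 0 ∨ m % 2 = 1 := Nat.mod_two_eq_zero_or_one m
    rcases h2 with h | h <;> simp [bitsVal, h, Nat.mul_comm] <;> omega

lemma bits_take (d m j : ℕ) (h : j ≤ d) :
    (bits d m).take j = bits j (m / 2 ^ (d - j)) := by
  induction d generalizing m j with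
  | zero => interval_cases j; rfl
  | succ d ih =>
    rcases Nat.lt_or_ge j (d + 1) with hj | hj
    · have hj' : j ≤ d := by omega
      rw [bits, List.take_append_of_le_length (by rw [bits_length]; omega), ih _ _ hj']
      congr 1
      rw [Nat.div_div_eq_div_mul]
      congr 1
      rw [← pow_succ']
      congr 1; omega
    · have : j = d + 1 := by omega
      subst this
      rw [List.take_of_length_le (by rw [bits_length])]
      simp

lemma bits_dropLast (d m : ℕ) : (bits (d + 1) m).dropLast = bits d (m / 2) := by
  rw [bits, List.dropLast_append_of_ne_nil (by simp)]
  simp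

lemma mem_seg_node {n t : ℕ} (ht1 : 1 ≤ t) (ht2 : t ≤ 2 ^ n) (j : ℕ) (hj : j ≤ n) :
    t ∈ seg n (bits j ((t - 1) / 2 ^ (n - j))) := by
  have hQ : 0 < 2 ^ (n - j) := Nat.pow_pos (by norm_num)
  have hlt : (t - 1) / 2 ^ (n - j) < 2 ^ j := by
    rw [Nat.div_lt_iff_lt_mul hQ, ← pow_add]
    have : n - j + j = n := by omega
    rw [Nat.add_comm, this]
    omega
  have hv : bitsVal (bits j ((t - 1) / 2 ^ (n - j))) = (t - 1) / 2 ^ (n - j) := by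
    rw [bitsVal_bits, Nat.mod_eq_of_lt hlt]
  have hdm := Nat.div_add_mod (t - 1) (2 ^ (n - j))
  have hmod : (t - 1) % 2 ^ (n - j) < 2 ^ (n - j) := Nat.mod_lt _ hQ
  simp only [seg, Finset.mem_Icc, hv, bits_length]
  have hcomm : (t - 1) / 2 ^ (n - j) * 2 ^ (n - j) = 2 ^ (n - j) * ((t - 1) / 2 ^ (n - j)) :=
    Nat.mul_comm _ _
  have hsucc : ((t - 1) / 2 ^ (n - j) + 1) * 2 ^ (n - j)
      = (t - 1) / 2 ^ (n - j) * 2 ^ (n - j) + 2 ^ (n - j) := by ring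
  omega

lemma cp_exists {n α β t : ℕ} (hα : 1 ≤ α) (hβ : β ≤ 2 ^ n) (ht : t ∈ Finset.Icc α β) :
    ∃ j ≤ n, bits j ((t - 1) / 2 ^ (n - j)) ∈ CP n α β ∧
      t ∈ seg n (bits j ((t - 1) / 2 ^ (n - j))) := by
  simp only [Finset.mem_Icc] at ht
  have ht1 : 1 ≤ t := le_trans hα ht.1
  have ht2 : t ≤ 2 ^ n := le_trans ht.2 hβ
  have Pn : seg n (bits n ((t - 1) / 2 ^ (n - n)) ) ⊆ Finset.Icc α β := by
    intro u hu
    simp only [seg, Finset.mem_Icc, bitsVal_bits, bits_length, Nat.sub_self, pow_zero,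
      Nat.div_one, Nat.mul_one] at hu
    have : t - 1 < 2 ^ n := by omega
    rw [Nat.mod_eq_of_lt this] at hu
    simp only [Finset.mem_Icc]
    omega
  have hex : ∃ j, seg n (bits j ((t - 1) / 2 ^ (n - j))) ⊆ Finset.Icc α β := ⟨n, Pn⟩
  classical
  have hspec := Nat.find_spec hex
  have hle : Nat.find hex ≤ n := Nat.find_le Pn
  refine ⟨Nat.find hex, hle, ⟨by rw [bits_length]; exact hle, hspec, ?_⟩,
    mem_seg_node ht1 ht2 _ hle⟩
  rcases Nat.eq_zero_or_pos (Nat.find hex) with h0 | hpos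
  · left; rw [h0]; rfl
  · right
    obtain ⟨j, hj⟩ : ∃ j, Nat.find hex = j + 1 := ⟨Nat.find hex - 1, by omega⟩
    rw [hj, bits_dropLast]
    have hdiv : (t - 1) / 2 ^ (n - (j + 1)) / 2 = (t - 1) / 2 ^ (n - j) := by
      rw [Nat.div_div_eq_div_mul, ← pow_succ]
      congr 2; omega
    rw [hdiv]
    exact Nat.find_min hex (by omega)

lemma concatTo_zero {k : ℕ} (b : Fin k → List Bool) (h : 0 < k) :
    concatTo b ⟨0, h⟩ = b ⟨0, h⟩ := by
  have h0 : (0:ℕ) < (List.finRange k).length := by simpa using h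
  simp [concatTo, List.take_succ, List.getElem?_eq_getElem h0, List.getElem_finRange]

lemma concatTo_succ {k : ℕ} (b : Fin k → List Bool) (j : ℕ) (h : j + 1 < k) :
    concatTo b ⟨j + 1, h⟩ = concatTo b ⟨j, by omega⟩ ++ b ⟨j + 1, h⟩ := by
  have h0 : j + 1 < (List.finRange k).length := by simpa using h
  simp [concatTo, List.take_succ, List.getElem?_eq_getElem h0, List.getElem_finRange]

lemma concatTo_append {k : ℕ} (b : Fin k → List Bool) (m m' : Fin k) (hmm : m ≤ m') :
    ∃ s, concatTo b m' = concatTo b m ++ s := by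
  have hsplit : (List.finRange k).take (m'.1 + 1)
      = (List.finRange k).take (m.1 + 1) ++ ((List.finRange k).take (m'.1 + 1)).drop (m.1 + 1) := by
    conv_lhs => rw [← List.take_append_drop (m.1 + 1) ((List.finRange k).take (m'.1 + 1))]
    rw [List.take_take, Nat.min_eq_left (by exact Nat.add_le_add_right hmm 1)]
  exact ⟨((((List.finRange k).take (m'.1 + 1)).drop (m.1 + 1)).map b).flatten,
    by rw [concatTo, concatTo]
       conv_lhs => rw [hsplit]
       rw [List.map_append, List.flatten_append]⟩

/-- **Interval intersection via canonical partitions** (Lemma on segment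
trees): discrete intervals `[α i, β i] ⊆ [1, 2^n]`, `i ∈ [k]`, have a nonempty
common intersection iff there are a permutation `σ` of `[k]` and bitstrings
`b 1, …, b k` such that for every `j`, the concatenation `b 1 ∘ ⋯ ∘ b j`,
viewed as a node of the segment tree `𝒯_{2^n}`, belongs to the canonical
partition `CP_N([α (σ j), β (σ j)])`. -/
theorem stmt_8 (n k : ℕ) (α β : Fin k → ℕ)
    (hα : ∀ i, 1 ≤ α i) (hαβ : ∀ i, α i ≤ β i) (hβ : ∀ i, β i ≤ 2 ^ n) :
    (∃ t : ℕ, ∀ i, t ∈ Finset.Icc (α i) (β i)) ↔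
    (∃ σ : Equiv.Perm (Fin k), ∃ b : Fin k → List Bool,
      ∀ j : Fin k, concatTo b j ∈ CP n (α (σ j)) (β (σ j))) := by
  constructor
  · rintro ⟨t, ht⟩
    rcases Nat.eq_zero_or_pos k with hk | hk
    · subst hk
      exact ⟨1, fun _ => [], fun j => j.elim0⟩
    · choose J hJn hJcp hJseg using fun i => cp_exists (hα i) (hβ i) (ht i)
      set leaf := bits n (t - 1) with hleaf
      have hnode : ∀ i, leaf.take (J i) = bits (J i) ((t - 1) / 2 ^ (n - J i)) :=
        fun i => bits_take n (t - 1) (J i) (hJn i)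
      set σ := Tuple.sort J with hσ
      have hmono := Tuple.monotone_sort J
      set b : Fin k → List Bool := fun m =>
        if h0 : m.1 = 0 then leaf.take (J (σ m))
        else (leaf.take (J (σ m))).drop (J (σ ⟨m.1 - 1, by omega⟩)) with hbdef
      have key : ∀ jv (h : jv < k), concatTo b ⟨jv, h⟩ = leaf.take (J (σ ⟨jv, h⟩)) := by
        intro jv
        induction jv with
        | zero =>
          intro h
          rw [concatTo_zero b h, hbdef]
          simp
        | succ jv ih =>
          intro h
          have hjv : jv < k := by omega
          rw [concatTo_succ b jv h, ih hjv]
          have hbs : b ⟨jv + 1, h⟩ = (leaf.take (J (σ ⟨jv + 1, h⟩))).drop (J (σ ⟨jv, hjv⟩)) := by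
            rw [hbdef]
            simp
          rw [hbs]
          have hm : J (σ ⟨jv, hjv⟩) ≤ J (σ ⟨jv + 1, h⟩) := by
            have := hmono (a := ⟨jv, hjv⟩) (b := ⟨jv + 1, h⟩) (by simp [Fin.mk_le_mk])
            simpa using this
          conv_lhs =>
            rw [show leaf.take (J (σ ⟨jv, hjv⟩))
                = (leaf.take (J (σ ⟨jv + 1, h⟩))).take (J (σ ⟨jv, hjv⟩)) from by
              rw [List.take_take, Nat.min_eq_left hm]]
          rw [List.take_append_drop]
      refine ⟨σ, b, fun m => ?_⟩
      have hkey := key m.1 m.2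
      rw [Fin.eta] at hkey
      rw [hkey, hnode (σ m)]
      exact hJcp (σ m)
  · rintro ⟨σ, b, hb⟩
    rcases Nat.eq_zero_or_pos k with hk | hk
    · subst hk
      exact ⟨1, fun i => i.elim0⟩
    · set last : Fin k := ⟨k - 1, by omega⟩ with hlastdef
      obtain ⟨t, ht⟩ := seg_nonempty (n := n) (concatTo b last)
      refine ⟨t, fun i => ?_⟩
      set m : Fin k := σ.symm i with hm
      have hσm : σ m = i := Equiv.apply_symm_apply σ i
      obtain ⟨s, hs⟩ := concatTo_append b m last (by
        change m.1 ≤ k - 1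
        omega)
      have hcp := hb m
      have hcplast := hb last
      have hlen : (concatTo b m).length + s.length ≤ n := by
        have := hcplast.1
        rw [hs, List.length_append] at this
        exact this
      have ht' : t ∈ seg n (concatTo b m) := by
        rw [hs] at ht
        exact seg_append_subset _ _ hlen ht
      have := hcp.2.1 ht'
      rwa [hσm] at this
end

section
/- If a full conjunctive query $Q$ is hierarchical, then for every permutation $\sigma$ of its $k$ atoms, the component $\widehat Q_\sigma$ of its multivariate extension is $\alpha$-acyclic (admits a join tree). -/
/-- A query (hypergraph of `k` atom schemas) is α-acyclic iff it has a join
tree: a tree on the atoms such that for every variable the atoms containing it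
induce a connected subtree. -/
def HasJoinTree {k : ℕ} {W : Type*} (X : Fin k → Finset W) : Prop :=
  ∃ G : SimpleGraph (Fin k), G.IsTree ∧
    ∀ w : W, (G.induce {i | w ∈ X i}).Preconnected

/-- The set `at(x)` of (indices of) atoms whose schema contains variable `x`. -/
def atomsOf {k : ℕ} {V : Type*} [DecidableEq V] (X : Fin k → Finset V) (x : V) :
    Finset (Fin k) :=
  Finset.univ.filter (fun i => x ∈ X i)

/-- A query with atom schemas `X` is **hierarchical** if for every pair of
variables `x, y`, either `at(x) ⊆ at(y)`, or `at(y) ⊆ at(x)`, or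
`at(x) ∩ at(y) = ∅`. -/
def Hierarchical {k : ℕ} {V : Type*} [DecidableEq V] (X : Fin k → Finset V) : Prop :=
  ∀ x y : V, atomsOf X x ⊆ atomsOf X y ∨ atomsOf X y ⊆ atomsOf X x ∨
    atomsOf X x ∩ atomsOf X y = ∅

/-- The atom schemas of the component `Q̂_σ` of the multivariate extension of
the query with atom schemas `X`: for a permutation `σ` of `[k]` and fresh
variables `Z_1, …, Z_k` (represented by `Sum.inr`), the `i`-th atom of `Q̂_σ`
has schema `{Z_1, …, Z_i} ∪ X (σ i)`. -/
def hatSchema {k : ℕ} {V : Type*} [DecidableEq V]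
    (X : Fin k → Finset V) (σ : Equiv.Perm (Fin k)) (i : Fin k) :
    Finset (V ⊕ Fin k) :=
  (X (σ i)).image Sum.inl ∪
    (Finset.univ.filter (fun j : Fin k => j ≤ i)).image Sum.inr

/-- In a chain-like family (restricted to sets containing `i`), there is a
minimal set among those satisfying a predicate `C`. -/
lemma exists_min_aux {k : ℕ} {V : Type*} (A : V → Finset (Fin k)) (i : Fin k)
    (hA : ∀ x y, A x ⊆ A y ∨ A y ⊆ A x ∨ A x ∩ A y = ∅)
    (C : V → Prop) (hC : ∀ x, C x → i ∈ A x) :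
    ∀ n (x : V), C x → (A x).card ≤ n → ∃ x₀, C x₀ ∧ ∀ y, C y → A x₀ ⊆ A y := by
  intro n
  induction n with
  | zero =>
    intro x hx hc
    have : A x = ∅ := Finset.card_eq_zero.mp (Nat.le_antisymm hc (Nat.zero_le _))
    exact absurd (hC x hx) (this ▸ Finset.notMem_empty i)
  | succ n ih =>
    intro x hx hc
    by_cases hall : ∀ y, C y → A x ⊆ A y
    · exact ⟨x, hx, hall⟩
    · push_neg at hall
      obtain ⟨y, hy, hsub⟩ := hall
      have hyx : A y ⊆ A x := by
        rcases hA x y with h | h | h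
        · exact absurd h hsub
        · exact h
        · exact absurd (Finset.mem_inter.mpr ⟨hC x hx, hC y hy⟩) (h ▸ Finset.notMem_empty i)
      have hlt : (A y).card < (A x).card :=
        Finset.card_lt_card ⟨hyx, fun h => hsub h⟩
      exact ih y hy (by omega)

/-- Climbing lemma: if a set is closed under a strictly increasing successor
map realized by adjacencies, the induced graph is preconnected. -/
lemma climb_preconnected {k : ℕ} (G : SimpleGraph (Fin k)) (q : Fin k → Fin k)
    (s : Set (Fin k))
    (hadj : ∀ i ∈ s, (∃ j ∈ s, i < j) → q i ∈ s ∧ i < q i ∧ G.Adj i (q i)) :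
    (G.induce s).Preconnected := by
  have key : ∀ n (a b : Fin k) (ha : a ∈ s) (hb : b ∈ s), a ≤ b → (∀ j ∈ s, j ≤ b) →
      (b : ℕ) - (a : ℕ) ≤ n → (G.induce s).Reachable ⟨a, ha⟩ ⟨b, hb⟩ := by
    intro n
    induction n with
    | zero =>
      intro a b ha hb hab hmax hle
      have : a = b := by
        apply Fin.le_antisymm hab
        have : (b : ℕ) ≤ (a : ℕ) := by omega
        exact this
      subst this
      rfl
    | succ n ih =>
      intro a b ha hb hab hmax hle
      rcases eq_or_lt_of_le hab with rfl | hlt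
      · rfl
      · obtain ⟨hqs, hqlt, hqadj⟩ := hadj a ha ⟨b, hb, hlt⟩
        have hqb : q a ≤ b := hmax _ hqs
        have hstep : (G.induce s).Adj ⟨a, ha⟩ ⟨q a, hqs⟩ := hqadj
        have hva : (a : ℕ) < (q a : ℕ) := hqlt
        have hvb : (q a : ℕ) ≤ (b : ℕ) := hqb
        exact hstep.reachable.trans (ih (q a) b hqs hb hqb hmax (by omega))
  intro u v
  obtain ⟨a, ha⟩ := u
  obtain ⟨b, hb⟩ := v
  have hsne : (Set.toFinite s).toFinset.Nonempty := ⟨a, by simpa using ha⟩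
  set m := (Set.toFinite s).toFinset.max' hsne with hm
  have hms : m ∈ s := by
    have := (Set.toFinite s).toFinset.max'_mem hsne
    simpa using this
  have hmax : ∀ j ∈ s, j ≤ m := fun j hj =>
    (Set.toFinite s).toFinset.le_max' j (by simpa using hj)
  exact ((key _ a m ha hms (hmax a ha) hmax le_rfl).trans
    (key _ b m hb hms (hmax b hb) hmax le_rfl).symm)

/-- **Hierarchical queries have acyclic multivariate extensions**: if the query
`Q` with `k ≥ 1` atom schemas `X` is hierarchical, then for every permutation
`σ` of the atoms, the component `Q̂_σ` of its multivariate extension is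
α-acyclic (admits a join tree). -/
theorem stmt_10 {k : ℕ} {V : Type*} [DecidableEq V] (hk : 1 ≤ k)
    (X : Fin k → Finset V) (hQ : Hierarchical X) (σ : Equiv.Perm (Fin k)) :
    HasJoinTree (hatSchema X σ) := by
  classical
  -- the transported atom family
  set A : V → Finset (Fin k) := fun x => atomsOf (fun i => X (σ i)) x with hA
  have hAmem : ∀ x i, i ∈ A x ↔ x ∈ X (σ i) := by
    intro x i; simp [hA, atomsOf]
  have hAh : ∀ x y, A x ⊆ A y ∨ A y ⊆ A x ∨ A x ∩ A y = ∅ := by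
    intro x y
    rcases hQ x y with h | h | h
    · left
      intro i hi
      rw [hAmem] at hi ⊢
      have := h (by simp [atomsOf, hi] : σ i ∈ atomsOf X x)
      simpa [atomsOf] using this
    · right; left
      intro i hi
      rw [hAmem] at hi ⊢
      have := h (by simp [atomsOf, hi] : σ i ∈ atomsOf X y)
      simpa [atomsOf] using this
    · right; right
      ext i
      simp only [Finset.mem_inter, Finset.notMem_empty, iff_false, not_and]
      intro h1 h2
      rw [hAmem] at h1 h2
      have : σ i ∈ atomsOf X x ∩ atomsOf X y := by simp [atomsOf, h1, h2]
      rw [h] at this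
      exact absurd this (Finset.notMem_empty _)
  -- definition of the successor map
  have hEx : ∀ i : Fin k, ∃ j : Fin k, i ≤ j ∧ ((i : ℕ) + 1 < k →
      i < j ∧ ∀ x, i ∈ A x → (∃ m ∈ A x, i < m) → j ∈ A x) := by
    intro i
    by_cases h : (i : ℕ) + 1 < k
    · by_cases hcoll : ∃ x, i ∈ A x ∧ ∃ m ∈ A x, i < m
      · obtain ⟨x, hx⟩ := hcoll
        obtain ⟨x₀, hx₀, hmin⟩ := exists_min_aux A i hAh
          (fun x => i ∈ A x ∧ ∃ m ∈ A x, i < m) (fun x hx => hx.1)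
          (A x).card x hx le_rfl
        obtain ⟨m, hmA, him⟩ := hx₀.2
        refine ⟨m, le_of_lt him, fun _ => ⟨him, ?_⟩⟩
        intro y h1 h2
        exact hmin y ⟨h1, h2⟩ hmA
      · push_neg at hcoll
        refine ⟨⟨(i : ℕ) + 1, h⟩, ?_, fun _ => ⟨?_, ?_⟩⟩
        · exact le_of_lt (by simp [Fin.lt_def])
        · simp [Fin.lt_def]
        · intro x h1 h2
          exact absurd h2 (by simpa using hcoll x h1)
    · exact ⟨i, le_rfl, fun hc => absurd hc h⟩
  choose q hq1 hq2 using hEx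
  -- the join tree
  set G : SimpleGraph (Fin k) := SimpleGraph.fromRel (fun a b => b = q a) with hG
  have hGadj : ∀ a b, G.Adj a b ↔ a ≠ b ∧ (b = q a ∨ a = q b) := by
    intro a b; simp [hG, SimpleGraph.fromRel_adj]
  have adj_eq : ∀ a b, G.Adj a b → a < b → b = q a := by
    intro a b hab hlt
    rcases (hGadj a b).mp hab with ⟨hne, h | h⟩
    · exact h
    · exact absurd (lt_of_lt_of_le hlt (h ▸ hq1 b)) (lt_irrefl a)
  -- the closure property used for preconnectivity
  have hclosure : ∀ (s : Set (Fin k)), (∀ i ∈ s, (∃ j ∈ s, i < j) → q i ∈ s) →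
      ∀ i ∈ s, (∃ j ∈ s, i < j) → q i ∈ s ∧ i < q i ∧ G.Adj i (q i) := by
    intro s hs i hi hj
    obtain ⟨j, hjs, hij⟩ := hj
    have hik : (i : ℕ) + 1 < k := by
      have h1 : (i : ℕ) < (j : ℕ) := hij
      have h2 : (j : ℕ) < k := j.isLt
      omega
    have hlt : i < q i := (hq2 i hik).1
    refine ⟨hs i hi ⟨j, hjs, hij⟩, hlt, ?_⟩
    rw [hGadj]
    exact ⟨ne_of_lt hlt, Or.inl rfl⟩
  -- G is connected
  have huniv : G.Preconnected := by
    have hpre := climb_preconnected G q Set.univ (by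
      intro i hi hj
      exact hclosure Set.univ (fun _ _ _ => Set.mem_univ _) i hi hj)
    intro a b
    have h := hpre ⟨a, Set.mem_univ a⟩ ⟨b, Set.mem_univ b⟩
    have := h.map (SimpleGraph.induceUnivIso G).toHom
    simpa [SimpleGraph.induceUnivIso] using this
  -- G is acyclic
  have hacyc : G.IsAcyclic := by
    intro v c hc
    have hvmem : v ∈ c.support.toFinset := by
      simp [SimpleGraph.Walk.start_mem_support]
    have hne : c.support.toFinset.Nonempty := ⟨v, hvmem⟩
    set m := c.support.toFinset.min' hne with hmdef
    have hm : m ∈ c.support := by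
      have := c.support.toFinset.min'_mem hne
      simpa using this
    have hmin : ∀ x ∈ c.support, m ≤ x := fun x hx =>
      c.support.toFinset.min'_le x (by simpa using hx)
    have hc' := hc.rotate hm
    have hsupp : ∀ x, x ∈ (c.rotate m hm).support.tail → x ∈ c.support := fun x hx =>
      List.mem_of_mem_tail (((SimpleGraph.Walk.support_rotate c m hm).mem_iff).mp hx)
    revert hc' hsupp
    generalize c.rotate m hm = c'
    intro hc' hsupp
    cases c' with
    | nil => exact hc'.ne_nil rfl
    | cons h p =>
      rename_i b
      obtain ⟨hpath, hedge⟩ := (SimpleGraph.Walk.cons_isCycle_iff p h).mp hc'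
      have htail : (SimpleGraph.Walk.cons h p).support.tail = p.support := by
        simp [SimpleGraph.Walk.support_cons]
      have hbmem : b ∈ p.support := p.start_mem_support
      have hmb : m < b := lt_of_le_of_ne
        (hmin b (hsupp b (htail ▸ hbmem))) h.ne
      have hbq : b = q m := adj_eq m b h hmb
      -- the last edge of p
      have hbm : b ≠ m := fun hbm => (hbm ▸ hmb).false
      obtain ⟨a, h', p'', hrev⟩ :=
        SimpleGraph.Walk.exists_eq_cons_of_ne (Ne.symm hbm) p.reverse
      have hamem : a ∈ p.support := by
        have : a ∈ p.reverse.support := by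
          rw [hrev]
          simp [SimpleGraph.Walk.support_cons, SimpleGraph.Walk.start_mem_support]
        rwa [SimpleGraph.Walk.support_reverse, List.mem_reverse] at this
      have hma : m < a := lt_of_le_of_ne
        (hmin a (hsupp a (htail ▸ hamem))) h'.ne
      have haq : a = q m := adj_eq m a h' hma
      have hedge_mem : s(m, a) ∈ p.edges := by
        have : s(m, a) ∈ p.reverse.edges := by
          rw [hrev, SimpleGraph.Walk.edges_cons]
          exact List.mem_cons_self
        rwa [SimpleGraph.Walk.edges_reverse, List.mem_reverse] at this
      rw [haq, ← hbq] at hedge_mem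
      exact hedge hedge_mem
  -- assemble
  haveI : Nonempty (Fin k) := ⟨⟨0, hk⟩⟩
  refine ⟨G, ⟨⟨huniv⟩, hacyc⟩, ?_⟩
  rintro (x | j)
  · -- original variable x
    have hset : {i : Fin k | Sum.inl x ∈ hatSchema X σ i} = {i : Fin k | i ∈ A x} := by
      ext i
      simp only [Set.mem_setOf_eq, hatSchema, Finset.mem_union, Finset.mem_image,
        Finset.mem_filter, Finset.mem_univ, true_and]
      rw [hAmem]
      constructor
      · rintro (⟨v', hv', hv⟩ | ⟨j', _, hv⟩)
        · injection hv with h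
          exact h ▸ hv'
        · exact absurd hv (by simp)
      · intro hm
        exact Or.inl ⟨x, hm, rfl⟩
    rw [hset]
    apply climb_preconnected G q _ (hclosure _ ?_)
    intro i hi ⟨j, hjs, hij⟩
    have hik : (i : ℕ) + 1 < k := by
      have h1 : (i : ℕ) < (j : ℕ) := hij
      have h2 : (j : ℕ) < k := j.isLt
      omega
    exact (hq2 i hik).2 x hi ⟨j, hjs, hij⟩
  · -- fresh variable Z_j
    have hset : {i : Fin k | Sum.inr j ∈ hatSchema X σ i} = {i : Fin k | j ≤ i} := by
      ext i
      simp only [Set.mem_setOf_eq, hatSchema, Finset.mem_union, Finset.mem_image,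
        Finset.mem_filter, Finset.mem_univ, true_and]
      constructor
      · rintro (⟨v', _, hv⟩ | ⟨j', hj', hv⟩)
        · exact absurd hv (by simp)
        · injection hv with h
          exact h ▸ hj'
      · intro hle
        exact Or.inr ⟨j, hle, rfl⟩
    rw [hset]
    apply climb_preconnected G q _ (hclosure _ ?_)
    intro i hi ⟨j', hjs, hij⟩
    have hik : (i : ℕ) + 1 < k := by
      have h1 : (i : ℕ) < (j' : ℕ) := hij
      have h2 : (j' : ℕ) < k := j'.isLt
      omega
    exact le_of_lt (lt_of_le_of_lt hi (hq2 i hik).1)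
end

section
/- Let $Q$ be a Loomis–Whitney query of degree $k \ge 3$: its variables are $A_1,\ldots,A_k$ and it has $k$ atoms, where atom $i$ has schema $\{A_1,\ldots,A_k\}\setminus\{A_i\}$. Then every component $\widehat Q_\sigma$ of its multivariate extension has fractional hypertree width exactly $3/2$. -/
/-- The **fractional edge cover number** `ρ*` of the query with atom schemas
`X` restricted to the set `B` of variables: the infimum of `∑ i, λ i` over all
nonnegative weightings `λ` of the atoms such that every variable in `B` is
covered with total weight at least `1` by the atoms containing it. -/
noncomputable def rhoStar {k : ℕ} {W : Type*} [DecidableEq W]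
    (X : Fin k → Finset W) (B : Finset W) : ℝ :=
  sInf {s : ℝ | ∃ lam : Fin k → ℝ, (∀ i, 0 ≤ lam i) ∧
    (∀ w ∈ B, 1 ≤ ∑ i ∈ Finset.univ.filter (fun i => w ∈ X i), lam i) ∧
    s = ∑ i : Fin k, lam i}

/-- A **tree decomposition** of the query with atom schemas `X`: a finite tree
`G` on nodes `ι` with bags `bag t` of variables, such that every atom's schema
is contained in some bag, and for every variable the bags containing it induce
a connected subtree. -/
structure TreeDecomp {k : ℕ} {W : Type*} (X : Fin k → Finset W) where
  ι : Type
  [instFin : Fintype ι]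
  G : SimpleGraph ι
  isTree : G.IsTree
  bag : ι → Finset W
  covers : ∀ i : Fin k, ∃ t : ι, X i ⊆ bag t
  connected : ∀ w : W, (G.induce {t | w ∈ bag t}).Preconnected

attribute [instance] TreeDecomp.instFin

/-- The atom schemas of the Loomis–Whitney query of degree `k`: variables are
`A_1, …, A_k` and atom `i` has schema `{A_1, …, A_k} \ {A_i}`. -/
def lwSchema (k : ℕ) (i : Fin k) : Finset (Fin k) := Finset.univ.erase i

/-! ### Auxiliary lemmas on graphs (Helly property of trees) -/

lemma LW.pathInS {ι : Type*} {G : SimpleGraph ι} {S : Set ι}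
    (h : (G.induce S).Preconnected) {u v : ι} (hu : u ∈ S) (hv : v ∈ S) :
    ∃ p : G.Walk u v, p.IsPath ∧ ∀ t ∈ p.support, t ∈ S := by
  classical
  obtain ⟨w⟩ := h ⟨u, hu⟩ ⟨v, hv⟩
  let w' : G.Walk u v := w.map (SimpleGraph.Embedding.induce S).toHom
  refine ⟨w'.bypass, w'.bypass_isPath, fun t ht => ?_⟩
  have := w'.support_bypass_subset ht
  rw [show w'.support = _ from SimpleGraph.Walk.support_map _ _] at this
  simp only [List.mem_map] at this
  obtain ⟨⟨t', ht'⟩, _, rfl⟩ := this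
  exact ht'

lemma LW.firstIn {ι : Type*} {G : SimpleGraph ι} {a c : ι} (w : G.Walk a c)
    (T : Set ι) (hc : c ∈ T) :
    ∃ (m : ι) (w1 : G.Walk a m), m ∈ T ∧ (∀ t ∈ w1.support, t ∈ w.support) ∧
      (∀ t ∈ w1.support, t ∈ T → t = m) := by
  classical
  revert hc
  induction w with
  | nil =>
    intro hc
    exact ⟨_, SimpleGraph.Walk.nil, hc, fun t ht => ht, by
      intro t ht _; simpa using ht⟩
  | cons h p ih =>
    intro hc
    rename_i u v c'
    by_cases hu : u ∈ T
    · refine ⟨u, SimpleGraph.Walk.nil, hu, ?_, ?_⟩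
      · intro t ht; simp only [SimpleGraph.Walk.support_nil, List.mem_singleton] at ht
        subst ht; exact SimpleGraph.Walk.start_mem_support _
      · intro t ht _; simpa using ht
    · obtain ⟨m, w1, hm, hsub, hint⟩ := ih hc
      refine ⟨m, SimpleGraph.Walk.cons h w1, hm, ?_, ?_⟩
      · intro t ht
        rw [SimpleGraph.Walk.support_cons, List.mem_cons] at ht
        rcases ht with rfl | ht
        · exact SimpleGraph.Walk.start_mem_support _
        · rw [SimpleGraph.Walk.support_cons, List.mem_cons]
          exact Or.inr (hsub t ht)
      · intro t ht htT
        rw [SimpleGraph.Walk.support_cons, List.mem_cons] at ht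
        rcases ht with rfl | ht
        · exact absurd htT hu
        · exact hint t ht htT

/-- The Helly property for subtrees of a tree. -/
lemma LW.treeHelly {ι : Type*} {G : SimpleGraph ι} (hG : G.IsTree)
    {S1 S2 S3 : Set ι}
    (h1 : (G.induce S1).Preconnected) (h2 : (G.induce S2).Preconnected)
    (h3 : (G.induce S3).Preconnected)
    {a b c : ι} (ha1 : a ∈ S1) (ha2 : a ∈ S2) (hb1 : b ∈ S1) (hb3 : b ∈ S3)
    (hc2 : c ∈ S2) (hc3 : c ∈ S3) :
    ∃ m, m ∈ S1 ∧ m ∈ S2 ∧ m ∈ S3 := by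
  classical
  obtain ⟨pac, hpac, hpacS⟩ := LW.pathInS h2 ha2 hc2
  obtain ⟨pbc, hpbc, hpbcS⟩ := LW.pathInS h3 hb3 hc3
  obtain ⟨m, w1, hmT, hsub, hint⟩ := LW.firstIn pac {t | t ∈ pbc.support}
    (SimpleGraph.Walk.end_mem_support pbc)
  have hmS2 : m ∈ S2 := hpacS m (hsub m (SimpleGraph.Walk.end_mem_support w1))
  have hmS3 : m ∈ S3 := hpbcS m hmT
  refine ⟨m, ?_, hmS2, hmS3⟩
  have hmT' : m ∈ pbc.support := hmT
  let w2 : G.Walk m b := (pbc.takeUntil m hmT').reverse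
  have hw2path : w2.IsPath := (hpbc.takeUntil hmT').reverse
  have hw2sub : ∀ t ∈ w2.support, t ∈ pbc.support := by
    intro t ht
    rw [SimpleGraph.Walk.support_reverse, List.mem_reverse] at ht
    exact SimpleGraph.Walk.support_takeUntil_subset _ hmT' ht
  let w1' := w1.bypass
  have hw1'path : w1'.IsPath := w1.bypass_isPath
  have hw1'sub : ∀ t ∈ w1'.support, t ∈ w1.support := fun t ht => w1.support_bypass_subset ht
  let q : G.Walk a b := w1'.append w2
  have hqpath : q.IsPath := by
    rw [SimpleGraph.Walk.isPath_def, SimpleGraph.Walk.support_append]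
    refine List.Nodup.append hw1'path.support_nodup hw2path.support_nodup.tail ?_
    intro t ht1 ht2
    have ht2' : t ∈ w2.support := List.mem_of_mem_tail ht2
    have htm : t = m := hint t (hw1'sub t ht1) (hw2sub t ht2')
    subst htm
    have hnm : t ∉ w2.support.tail := by
      have hn := hw2path.support_nodup
      rw [SimpleGraph.Walk.support_eq_cons] at hn
      exact (List.nodup_cons.mp hn).1
    exact absurd ht2 hnm
  have hmq : m ∈ q.support := by
    rw [SimpleGraph.Walk.mem_support_append_iff]
    exact Or.inl (SimpleGraph.Walk.end_mem_support w1')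
  obtain ⟨q', hq'path, hq'S⟩ := LW.pathInS h1 ha1 hb1
  exact hq'S m ((hG.existsUnique_path a b).unique hqpath hq'path ▸ hmq)

lemma LW.top_induce_preconnected {ι : Type*} (s : Set ι) :
    ((⊤ : SimpleGraph ι).induce s).Preconnected := by
  intro u v
  by_cases h : u = v
  · subst h; exact SimpleGraph.Reachable.refl _
  · refine SimpleGraph.Adj.reachable ?_
    simp only [SimpleGraph.comap_adj, Function.Embedding.coe_subtype, SimpleGraph.top_adj]
    exact fun e => h (Subtype.ext e)

lemma LW.top_isTree {ι : Type*} [Fintype ι] [Nonempty ι] (hcard : Fintype.card ι ≤ 2) :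
    (⊤ : SimpleGraph ι).IsTree := by
  refine ⟨SimpleGraph.connected_top, ?_⟩
  intro v c hc
  have h3 := hc.three_le_length
  have hnodup : c.support.tail.Nodup := hc.support_nodup
  have hlen : c.support.tail.length = c.length := by
    have := c.length_support
    have h2 := List.length_tail (l := c.support)
    omega
  have := List.Nodup.length_le_card hnodup
  omega

/-! ### Auxiliary lemmas on `rhoStar` -/

lemma LW.rhoSet_bdd {k : ℕ} {W : Type*} [DecidableEq W] (X : Fin k → Finset W) (B : Finset W) :
    BddBelow {s : ℝ | ∃ lam : Fin k → ℝ, (∀ i, 0 ≤ lam i) ∧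
      (∀ w ∈ B, 1 ≤ ∑ i ∈ Finset.univ.filter (fun i => w ∈ X i), lam i) ∧
      s = ∑ i : Fin k, lam i} := by
  refine ⟨0, fun s hs => ?_⟩
  obtain ⟨lam, h0, _, rfl⟩ := hs
  exact Finset.sum_nonneg fun i _ => h0 i

lemma LW.rho_le {k : ℕ} {W : Type*} [DecidableEq W] (X : Fin k → Finset W) (B : Finset W)
    (lam : Fin k → ℝ) (h0 : ∀ i, 0 ≤ lam i)
    (hcov : ∀ w ∈ B, 1 ≤ ∑ i ∈ Finset.univ.filter (fun i => w ∈ X i), lam i) :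
    rhoStar X B ≤ ∑ i : Fin k, lam i :=
  csInf_le (LW.rhoSet_bdd X B) ⟨lam, h0, hcov, rfl⟩

lemma LW.rho_ge {k : ℕ} {W : Type*} [DecidableEq W] (X : Fin k → Finset W) (B : Finset W)
    (x y z : W) (hx : x ∈ B) (hy : y ∈ B) (hz : z ∈ B)
    (hcovall : ∀ w ∈ B, ∃ i, w ∈ X i)
    (htri : ∀ i, ¬(x ∈ X i ∧ y ∈ X i ∧ z ∈ X i)) :
    (3 : ℝ) / 2 ≤ rhoStar X B := by
  refine le_csInf ⟨∑ i : Fin k, (1 : ℝ), fun w => (1 : ℝ), fun i => zero_le_one, ?_, rfl⟩ ?_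
  · intro w hw
    obtain ⟨i, hi⟩ := hcovall w hw
    have : i ∈ Finset.univ.filter (fun i => w ∈ X i) := by simp [hi]
    calc (1 : ℝ) = (fun _ : Fin k => (1:ℝ)) i := rfl
    _ ≤ _ := Finset.single_le_sum (fun j _ => zero_le_one) this
  · rintro s ⟨lam, h0, hcov, rfl⟩
    have key : ∀ w : W, ∑ i ∈ Finset.univ.filter (fun i => w ∈ X i), lam i
        = ∑ i : Fin k, if w ∈ X i then lam i else 0 := fun w =>
      Finset.sum_filter _ _
    have hX := hcov x hx
    have hY := hcov y hy
    have hZ := hcov z hz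
    rw [key] at hX hY hZ
    have main : (∑ i : Fin k, if x ∈ X i then lam i else 0)
        + (∑ i : Fin k, if y ∈ X i then lam i else 0)
        + (∑ i : Fin k, if z ∈ X i then lam i else 0)
        ≤ 2 * ∑ i : Fin k, lam i := by
      rw [← Finset.sum_add_distrib, ← Finset.sum_add_distrib, Finset.mul_sum]
      refine Finset.sum_le_sum fun i _ => ?_
      have h := htri i
      have := h0 i
      split_ifs <;> push_neg at h <;> first | linarith | (exfalso; tauto)
    linarith

/-! ### Membership in `hatSchema (lwSchema k)` -/

lemma LW.mem_inl {k : ℕ} (σ : Equiv.Perm (Fin k)) (a i : Fin k) :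
    Sum.inl a ∈ hatSchema (lwSchema k) σ i ↔ a ≠ σ i := by
  simp [hatSchema, lwSchema]

lemma LW.mem_inr {k : ℕ} (σ : Equiv.Perm (Fin k)) (j i : Fin k) :
    Sum.inr j ∈ hatSchema (lwSchema k) σ i ↔ j ≤ i := by
  simp [hatSchema, lwSchema]

/-- **Multivariate extensions of Loomis–Whitney queries have width exactly
`3/2`**: for a Loomis–Whitney query of degree `k ≥ 3` and any permutation `σ`,
every tree decomposition of the component `Q̂_σ` of the multivariate extension
has a bag with fractional edge cover number at least `3/2`, and there is a
tree decomposition all of whose bags have fractional edge cover number at most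
`3/2`; i.e., `Q̂_σ` has fractional hypertree width exactly `3/2`. -/
theorem stmt_13 (k : ℕ) (hk : 3 ≤ k) (σ : Equiv.Perm (Fin k)) :
    (∀ D : TreeDecomp (hatSchema (lwSchema k) σ),
        ∃ t : D.ι, (3 : ℝ) / 2 ≤ rhoStar (hatSchema (lwSchema k) σ) (D.bag t)) ∧
    (∃ D : TreeDecomp (hatSchema (lwSchema k) σ),
        ∀ t : D.ι, rhoStar (hatSchema (lwSchema k) σ) (D.bag t) ≤ (3 : ℝ) / 2) := by
  classical
  set X := hatSchema (lwSchema k) σ with hXdef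
  have hkpos : 0 < k := by omega
  let i0 : Fin k := ⟨0, by omega⟩
  let t0 : Fin k := ⟨k - 3, by omega⟩
  let i1 : Fin k := ⟨k - 2, by omega⟩
  let i2 : Fin k := ⟨k - 1, by omega⟩
  have hv0 : i0.val = 0 := rfl
  have hvt : t0.val = k - 3 := rfl
  have hv1 : i1.val = k - 2 := rfl
  have hv2 : i2.val = k - 1 := rfl
  have h01 : i0 ≠ i1 := by
    intro e; have := congrArg Fin.val e; rw [hv0, hv1] at this; omega
  have h02 : i0 ≠ i2 := by
    intro e; have := congrArg Fin.val e; rw [hv0, hv2] at this; omega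
  have h12 : i1 ≠ i2 := by
    intro e; have := congrArg Fin.val e; rw [hv1, hv2] at this; omega
  have ht01 : t0 ≠ i1 := by
    intro e; have := congrArg Fin.val e; rw [hvt, hv1] at this; omega
  have ht02 : t0 ≠ i2 := by
    intro e; have := congrArg Fin.val e; rw [hvt, hv2] at this; omega
  have hle12 : i1 ≤ i2 := by rw [Fin.le_def, hv1, hv2]; omega
  have hle_top : ∀ i : Fin k, i ≤ i2 := by
    intro i; rw [Fin.le_def, hv2]; have := i.isLt; omega
  -- the variables x, y, z of the triple
  set x : Fin k ⊕ Fin k := Sum.inr i1 with hxdef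
  set y : Fin k ⊕ Fin k := Sum.inl (σ i1) with hydef
  set z : Fin k ⊕ Fin k := Sum.inl (σ i2) with hzdef
  have hcovall : ∀ w : Fin k ⊕ Fin k, ∃ i, w ∈ X i := by
    intro w
    rcases w with a | j
    · by_cases h : σ i0 = a
      · refine ⟨i1, (LW.mem_inl σ a i1).2 ?_⟩
        intro e; exact h01 (σ.injective (h.trans e))
      · exact ⟨i0, (LW.mem_inl σ a i0).2 fun e => h e.symm⟩
    · exact ⟨i2, (LW.mem_inr σ j i2).2 (hle_top j)⟩
  constructor
  · -- lower bound
    intro D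
    obtain ⟨ta, hta⟩ := D.covers i2
    obtain ⟨tb, htb⟩ := D.covers i1
    obtain ⟨tc, htc⟩ := D.covers i0
    have hax : x ∈ D.bag ta := hta ((LW.mem_inr σ i1 i2).2 hle12)
    have hay : y ∈ D.bag ta := hta ((LW.mem_inl σ (σ i1) i2).2 fun e => h12 (σ.injective e))
    have hbx : x ∈ D.bag tb := htb ((LW.mem_inr σ i1 i1).2 le_rfl)
    have hbz : z ∈ D.bag tb := htb ((LW.mem_inl σ (σ i2) i1).2 fun e => h12 (σ.injective e.symm))
    have hcy : y ∈ D.bag tc := htc ((LW.mem_inl σ (σ i1) i0).2 fun e => h01 (σ.injective e.symm))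
    have hcz : z ∈ D.bag tc := htc ((LW.mem_inl σ (σ i2) i0).2 fun e => h02 (σ.injective e.symm))
    obtain ⟨m, hmx, hmy, hmz⟩ := LW.treeHelly D.isTree
      (D.connected x) (D.connected y) (D.connected z) hax hay hbx hbz hcy hcz
    refine ⟨m, LW.rho_ge X (D.bag m) x y z hmx hmy hmz (fun w _ => hcovall w) ?_⟩
    rintro i ⟨hxi, hyi, hzi⟩
    have h1 : i1 ≤ i := (LW.mem_inr σ i1 i).1 hxi
    have h2 : σ i1 ≠ σ i := (LW.mem_inl σ (σ i1) i).1 hyi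
    have h3 : σ i2 ≠ σ i := (LW.mem_inl σ (σ i2) i).1 hzi
    have hne1 : i ≠ i1 := fun e => h2 (congrArg σ e.symm)
    have hne2 : i ≠ i2 := fun e => h3 (congrArg σ e.symm)
    have hv1 : i.val ≠ k - 2 := fun e => hne1 (Fin.ext e)
    have hv2 : i.val ≠ k - 1 := fun e => hne2 (Fin.ext e)
    have hv3 : k - 2 ≤ i.val := h1
    have := i.isLt
    omega
  · -- upper bound: explicit tree decomposition with two bags
    refine ⟨{ ι := Bool
              G := ⊤
              isTree := LW.top_isTree (by simp)
              bag := fun b => if b then X i2 else Finset.univ.erase (Sum.inr i2)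
              covers := ?_
              connected := fun w => LW.top_induce_preconnected _ }, ?_⟩
    · intro i
      by_cases hi : i = i2
      · exact ⟨true, by simp [hi]⟩
      · refine ⟨false, fun w hw => ?_⟩
        simp only [if_neg Bool.false_ne_true, Finset.mem_erase, Finset.mem_univ, and_true]
        rintro rfl
        exact hi (le_antisymm (hle_top i) ((LW.mem_inr σ i2 i).1 hw))
    · intro t
      cases t with
      | true =>
        have h1 : rhoStar X (X i2) ≤ ∑ i : Fin k, (if i = i2 then (1:ℝ) else 0) := by
          refine LW.rho_le X (X i2) _ (fun i => by split <;> norm_num) ?_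
          intro w hw
          have hmem : i2 ∈ Finset.univ.filter (fun i => w ∈ X i) := by simp [hw]
          calc (1:ℝ) = (if i2 = i2 then (1:ℝ) else 0) := by simp
          _ ≤ _ := Finset.single_le_sum (f := fun i => if i = i2 then (1:ℝ) else 0)
              (fun j _ => by split <;> norm_num) hmem
        have h2 : ∑ i : Fin k, (if i = i2 then (1:ℝ) else 0) = 1 := by
          simp [Finset.sum_ite_eq']
        simp only [if_pos]
        rw [h2] at h1
        linarith
      | false =>
        have hS : ({t0, i1, i2} : Finset (Fin k)).card = 3 := by
          rw [Finset.card_insert_of_notMem (by simp [ht01, ht02]),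
            Finset.card_insert_of_notMem (by simp [h12]), Finset.card_singleton]
        have hsum : ∑ i : Fin k, (if i ∈ ({t0, i1, i2} : Finset (Fin k)) then (1/2:ℝ) else 0)
            = 3 / 2 := by
          rw [Finset.sum_ite_mem, Finset.univ_inter, Finset.sum_const, hS]
          norm_num
        have key : rhoStar X (Finset.univ.erase (Sum.inr i2))
            ≤ ∑ i : Fin k, (if i ∈ ({t0, i1, i2} : Finset (Fin k)) then (1/2:ℝ) else 0) := by
          refine LW.rho_le X _ _ (fun i => by split <;> norm_num) ?_
          intro w hw
          -- find two distinct atoms among the last three containing w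
          have hpair : ∃ p q : Fin k, p ≠ q ∧ p ∈ ({t0, i1, i2} : Finset (Fin k)) ∧
              q ∈ ({t0, i1, i2} : Finset (Fin k)) ∧ w ∈ X p ∧ w ∈ X q := by
            rcases w with a | j
            · by_cases h0' : a = σ t0
              · refine ⟨i1, i2, h12, by simp, by simp, ?_, ?_⟩
                · exact (LW.mem_inl σ a i1).2 fun e =>
                    ht01 (σ.injective (h0'.symm.trans e).symm).symm
                · exact (LW.mem_inl σ a i2).2 fun e =>
                    ht02 (σ.injective (h0'.symm.trans e).symm).symm
              · by_cases h1' : a = σ i1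
                · refine ⟨t0, i2, ht02, by simp, by simp, ?_, ?_⟩
                  · exact (LW.mem_inl σ a t0).2 fun e => h0' e
                  · exact (LW.mem_inl σ a i2).2 fun e =>
                      h12 (σ.injective (h1'.symm.trans e))
                · refine ⟨t0, i1, ht01, by simp, by simp, ?_, ?_⟩
                  · exact (LW.mem_inl σ a t0).2 fun e => h0' e
                  · exact (LW.mem_inl σ a i1).2 fun e => h1' e
            · have hj : j ≠ i2 := by
                intro e
                rw [Finset.mem_erase] at hw
                exact hw.1 (by rw [e])
              have hjv : j.val ≤ k - 2 := by
                have := j.isLt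
                have : j.val ≠ k - 1 := fun e => hj (Fin.ext e)
                omega
              refine ⟨i1, i2, h12, by simp, by simp, ?_, ?_⟩
              · exact (LW.mem_inr σ j i1).2 (by simpa [i1, Fin.le_def] using hjv)
              · exact (LW.mem_inr σ j i2).2 (hle_top j)
          obtain ⟨p, q, hpq, hpS, hqS, hwp, hwq⟩ := hpair
          have hsub : ({p, q} : Finset (Fin k)) ⊆ Finset.univ.filter (fun i => w ∈ X i) := by
            intro r hr
            rcases Finset.mem_insert.mp hr with rfl | hr
            · simp [hwp]
            · rw [Finset.mem_singleton] at hr; subst hr; simp [hwq]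
          calc (1:ℝ) = (if p ∈ ({t0, i1, i2} : Finset (Fin k)) then (1/2:ℝ) else 0)
              + (if q ∈ ({t0, i1, i2} : Finset (Fin k)) then (1/2:ℝ) else 0) := by
                rw [if_pos hpS, if_pos hqS]; norm_num
          _ = ∑ i ∈ ({p, q} : Finset (Fin k)),
                (if i ∈ ({t0, i1, i2} : Finset (Fin k)) then (1/2:ℝ) else 0) :=
              (Finset.sum_pair (f := fun i =>
                if i ∈ ({t0, i1, i2} : Finset (Fin k)) then (1/2:ℝ) else 0) hpq).symm
          _ ≤ _ := Finset.sum_le_sum_of_subset_of_nonneg hsub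
              (fun i _ _ => by split <;> norm_num)
        rw [hsum] at key
        simpa using key
end

section
/- For any full conjunctive query $Q$ with multivariate extension $\widehat Q$, we have $\mathsf{w}(Q) \le \mathsf{w}(\widehat Q) \le \mathsf{w}(Q) + 1$, where $\mathsf{w}$ denotes fractional hypertree width and $\mathsf{w}(\widehat Q)$ is the maximum of $\mathsf{w}(\widehat Q_\sigma)$ over all components $\sigma$. -/
/-- The **width** of a tree decomposition: the maximum over its bags of the
fractional edge cover number of the query restricted to the bag. -/
noncomputable def tdWidth {k : ℕ} {W : Type*} [DecidableEq W]
    (X : Fin k → Finset W) (D : TreeDecomp X) : ℝ :=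
  ⨆ t : D.ι, rhoStar X (D.bag t)

/-- The **fractional hypertree width** `w(Q)` of the query with atom schemas
`X`: the infimum of the widths of its tree decompositions. -/
noncomputable def fhtw {k : ℕ} {W : Type*} [DecidableEq W]
    (X : Fin k → Finset W) : ℝ :=
  sInf {w : ℝ | ∃ D : TreeDecomp X, tdWidth X D = w}


section Aux

open Finset

variable {k : ℕ}

lemma mem_hatSchema_inl {V : Type*} [DecidableEq V] (X : Fin k → Finset V)
    (σ : Equiv.Perm (Fin k)) (x : V) (j : Fin k) :
    Sum.inl x ∈ hatSchema X σ j ↔ x ∈ X (σ j) := by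
  simp [hatSchema]

lemma mem_hatSchema_inr {V : Type*} [DecidableEq V] (X : Fin k → Finset V)
    (σ : Equiv.Perm (Fin k)) (z : Fin k) (j : Fin k) :
    Sum.inr z ∈ hatSchema X σ j ↔ z ≤ j := by
  simp [hatSchema]

lemma rhoStar_nonneg {W : Type*} [DecidableEq W] (X : Fin k → Finset W) (B : Finset W) :
    0 ≤ rhoStar X B := by
  apply Real.sInf_nonneg
  rintro s ⟨lam, h0, -, rfl⟩
  exact Finset.sum_nonneg fun i _ => h0 i

lemma rhoStar_bddBelow {W : Type*} [DecidableEq W] (X : Fin k → Finset W) (B : Finset W) :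
    BddBelow {s : ℝ | ∃ lam : Fin k → ℝ, (∀ i, 0 ≤ lam i) ∧
      (∀ w ∈ B, 1 ≤ ∑ i ∈ Finset.univ.filter (fun i => w ∈ X i), lam i) ∧
      s = ∑ i : Fin k, lam i} := by
  refine ⟨0, ?_⟩
  rintro s ⟨lam, h0, -, rfl⟩
  exact Finset.sum_nonneg fun i _ => h0 i

/-- The trivial one-node tree decomposition with a single full bag. -/
def trivialTD {W : Type*} [Fintype W] (X : Fin k → Finset W) : TreeDecomp X where
  ι := Unit
  G := ⊥
  isTree := ⟨⟨SimpleGraph.preconnected_bot⟩, by simp [SimpleGraph.isAcyclic_bot]⟩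
  bag := fun _ => Finset.univ
  covers := fun _ => ⟨(), Finset.subset_univ _⟩
  connected := fun w u v => by
    have : u = v := Subsingleton.elim u v
    rw [this]

lemma fhtw_set_nonempty {W : Type*} [Fintype W] [DecidableEq W] (X : Fin k → Finset W) :
    {w : ℝ | ∃ D : TreeDecomp X, tdWidth X D = w}.Nonempty :=
  ⟨tdWidth X (trivialTD X), trivialTD X, rfl⟩

lemma tdWidth_nonneg {W : Type*} [DecidableEq W] (X : Fin k → Finset W) (D : TreeDecomp X) :
    0 ≤ tdWidth X D := by
  have : Nonempty D.ι := D.isTree.isConnected.nonempty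
  obtain ⟨t⟩ := this
  refine le_trans (rhoStar_nonneg X (D.bag t)) ?_
  unfold tdWidth
  exact le_ciSup (f := fun t => rhoStar X (D.bag t))
    (Set.Finite.bddAbove (Set.finite_range _)) t

lemma fhtw_set_bddBelow {W : Type*} [DecidableEq W] (X : Fin k → Finset W) :
    BddBelow {w : ℝ | ∃ D : TreeDecomp X, tdWidth X D = w} := by
  refine ⟨0, ?_⟩
  rintro w ⟨D, rfl⟩
  exact tdWidth_nonneg X D

/-- Reindexing: a feasible weighting for `Q̂_σ` on `Bh` gives a feasible weighting
for `Q` on a set `B` matching `Bh` on the `inl` part, with the same total weight. -/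
lemma hat_value_mem {V : Type*} [DecidableEq V] (X : Fin k → Finset V)
    (σ : Equiv.Perm (Fin k)) {Bh : Finset (V ⊕ Fin k)} {B : Finset V}
    (hB : ∀ x : V, x ∈ B → Sum.inl x ∈ Bh) :
    {s : ℝ | ∃ lam : Fin k → ℝ, (∀ i, 0 ≤ lam i) ∧
      (∀ w ∈ Bh, 1 ≤ ∑ i ∈ Finset.univ.filter (fun i => w ∈ hatSchema X σ i), lam i) ∧
      s = ∑ i : Fin k, lam i} ⊆
    {s : ℝ | ∃ lam : Fin k → ℝ, (∀ i, 0 ≤ lam i) ∧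
      (∀ w ∈ B, 1 ≤ ∑ i ∈ Finset.univ.filter (fun i => w ∈ X i), lam i) ∧
      s = ∑ i : Fin k, lam i} := by
  rintro s ⟨lam, h0, hcov, rfl⟩
  refine ⟨fun i => lam (σ.symm i), fun i => h0 _, ?_, (Equiv.sum_comp σ.symm lam).symm⟩
  intro x hx
  have h1 := hcov (Sum.inl x) (hB x hx)
  calc (1:ℝ) ≤ ∑ j ∈ Finset.univ.filter (fun j => Sum.inl x ∈ hatSchema X σ j), lam j := h1
    _ = ∑ i ∈ Finset.univ.filter (fun i => x ∈ X i), lam (σ.symm i) := by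
        rw [Finset.sum_filter, Finset.sum_filter]
        refine Fintype.sum_equiv σ _ _ fun j => ?_
        simp [mem_hatSchema_inl]

/-- Lifting: a feasible weighting for `Q` on `B` gives a feasible weighting for
`Q̂_σ` on `Bh`, with total weight larger by at most `1`. -/
lemma hat_feasible {V : Type*} [DecidableEq V] (X : Fin k → Finset V)
    (σ : Equiv.Perm (Fin k)) {Bh : Finset (V ⊕ Fin k)} {B : Finset V}
    (hB : ∀ x : V, Sum.inl x ∈ Bh → x ∈ B)
    (lam : Fin k → ℝ) (h0 : ∀ i, 0 ≤ lam i)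
    (hcov : ∀ x ∈ B, 1 ≤ ∑ i ∈ Finset.univ.filter (fun i => x ∈ X i), lam i) :
    ∃ lamh : Fin k → ℝ, (∀ j, 0 ≤ lamh j) ∧
      (∀ w ∈ Bh, 1 ≤ ∑ j ∈ Finset.univ.filter (fun j => w ∈ hatSchema X σ j), lamh j) ∧
      ∑ j : Fin k, lamh j ≤ (∑ i : Fin k, lam i) + 1 := by
  classical
  set ind : Fin k → ℝ := fun j => if ∀ j' : Fin k, j' ≤ j then 1 else 0 with hind
  have hind0 : ∀ j, 0 ≤ ind j := by
    intro j; simp only [hind]; split_ifs <;> norm_num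
  refine ⟨fun j => lam (σ j) + ind j, fun j => add_nonneg (h0 _) (hind0 j), ?_, ?_⟩
  · rintro (x | z) hw
    · have h1 := hcov x (hB x hw)
      have h2 : ∑ i ∈ Finset.univ.filter (fun i => x ∈ X i), lam i
          = ∑ j ∈ Finset.univ.filter (fun j => Sum.inl x ∈ hatSchema X σ j), lam (σ j) := by
        rw [Finset.sum_filter, Finset.sum_filter]
        refine Fintype.sum_equiv σ.symm _ _ fun j => ?_
        simp [mem_hatSchema_inl]
      calc (1:ℝ) ≤ ∑ i ∈ Finset.univ.filter (fun i => x ∈ X i), lam i := h1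
        _ = ∑ j ∈ Finset.univ.filter (fun j => Sum.inl x ∈ hatSchema X σ j), lam (σ j) := h2
        _ ≤ ∑ j ∈ Finset.univ.filter (fun j => Sum.inl x ∈ hatSchema X σ j),
              (lam (σ j) + ind j) :=
            Finset.sum_le_sum fun j _ => le_add_of_nonneg_right (hind0 j)
    · have hne : (Finset.univ : Finset (Fin k)).Nonempty := ⟨z, Finset.mem_univ z⟩
      set j₀ := Finset.univ.max' hne with hj₀
      have htop : ∀ j' : Fin k, j' ≤ j₀ := fun j' => Finset.le_max' _ _ (Finset.mem_univ _)
      have hmem : j₀ ∈ Finset.univ.filter (fun j => Sum.inr z ∈ hatSchema X σ j) := by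
        simp [mem_hatSchema_inr, htop z]
      have hval : (1:ℝ) ≤ lam (σ j₀) + ind j₀ := by
        have : ind j₀ = 1 := by simp only [hind]; rw [if_pos htop]
        rw [this]
        linarith [h0 (σ j₀)]
      exact le_trans hval (Finset.single_le_sum
        (fun j _ => add_nonneg (h0 _) (hind0 j)) hmem)
  · have hsum : ∑ j : Fin k, lam (σ j) = ∑ i : Fin k, lam i := Equiv.sum_comp σ lam
    have hcard : ∑ j : Fin k, ind j ≤ 1 := by
      have : ∑ j : Fin k, ind j
          = ((Finset.univ.filter (fun j : Fin k => ∀ j' : Fin k, j' ≤ j)).card : ℝ) := by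
        simp [hind, Finset.sum_boole]
      rw [this]
      have hle : (Finset.univ.filter (fun j : Fin k => ∀ j' : Fin k, j' ≤ j)).card ≤ 1 := by
        apply Finset.card_le_one.mpr
        intro a ha b hb
        simp only [Finset.mem_filter] at ha hb
        exact le_antisymm (hb.2 a) (ha.2 b)
      exact_mod_cast hle
    calc ∑ j : Fin k, (lam (σ j) + ind j)
        = (∑ j : Fin k, lam (σ j)) + ∑ j : Fin k, ind j := Finset.sum_add_distrib
      _ ≤ (∑ i : Fin k, lam i) + 1 := by rw [hsum]; linarith

/-- Core inequality, deletion direction. -/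
lemma rhoStar_le_hat {V : Type*} [DecidableEq V] (X : Fin k → Finset V)
    (σ : Equiv.Perm (Fin k)) {Bh : Finset (V ⊕ Fin k)} {B : Finset V}
    (hB : ∀ x : V, Sum.inl x ∈ Bh ↔ x ∈ B) :
    rhoStar X B ≤ rhoStar (hatSchema X σ) Bh := by
  classical
  set HS := {s : ℝ | ∃ lam : Fin k → ℝ, (∀ i, 0 ≤ lam i) ∧
      (∀ w ∈ Bh, 1 ≤ ∑ i ∈ Finset.univ.filter (fun i => w ∈ hatSchema X σ i), lam i) ∧
      s = ∑ i : Fin k, lam i} with hHS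
  by_cases h : HS.Nonempty
  · exact csInf_le_csInf (rhoStar_bddBelow X B) h
      (hat_value_mem X σ (fun x hx => (hB x).mpr hx))
  · have hQ : ¬ ({s : ℝ | ∃ lam : Fin k → ℝ, (∀ i, 0 ≤ lam i) ∧
        (∀ w ∈ B, 1 ≤ ∑ i ∈ Finset.univ.filter (fun i => w ∈ X i), lam i) ∧
        s = ∑ i : Fin k, lam i}).Nonempty := by
      rintro ⟨s, lam, h0, hcov, rfl⟩
      obtain ⟨lamh, hh0, hhcov, -⟩ :=
        hat_feasible X σ (fun x hx => (hB x).mp hx) lam h0 hcov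
      exact h ⟨∑ j : Fin k, lamh j, lamh, hh0, hhcov, rfl⟩
    rw [Set.not_nonempty_iff_eq_empty] at h hQ
    simp only [rhoStar, hHS] at *
    rw [h, hQ, Real.sInf_empty]

/-- Core inequality, extension direction. -/
lemma hat_rhoStar_le {V : Type*} [DecidableEq V] (X : Fin k → Finset V)
    (σ : Equiv.Perm (Fin k)) {Bh : Finset (V ⊕ Fin k)} {B : Finset V}
    (hB : ∀ x : V, Sum.inl x ∈ Bh ↔ x ∈ B) :
    rhoStar (hatSchema X σ) Bh ≤ rhoStar X B + 1 := by
  classical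
  set QS := {s : ℝ | ∃ lam : Fin k → ℝ, (∀ i, 0 ≤ lam i) ∧
      (∀ w ∈ B, 1 ≤ ∑ i ∈ Finset.univ.filter (fun i => w ∈ X i), lam i) ∧
      s = ∑ i : Fin k, lam i} with hQS
  by_cases h : QS.Nonempty
  · have key : ∀ s ∈ QS, rhoStar (hatSchema X σ) Bh ≤ s + 1 := by
      rintro s ⟨lam, h0, hcov, rfl⟩
      obtain ⟨lamh, hh0, hhcov, hsum⟩ :=
        hat_feasible X σ (fun x hx => (hB x).mp hx) lam h0 hcov
      exact le_trans (csInf_le (rhoStar_bddBelow (hatSchema X σ) Bh)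
        ⟨lamh, hh0, hhcov, rfl⟩) hsum
    have h2 : rhoStar (hatSchema X σ) Bh - 1 ≤ sInf QS :=
      le_csInf h fun s hs => by linarith [key s hs]
    have : sInf QS = rhoStar X B := rfl
    linarith [h2, this ▸ h2]
  · have hH : ¬ ({s : ℝ | ∃ lam : Fin k → ℝ, (∀ i, 0 ≤ lam i) ∧
        (∀ w ∈ Bh, 1 ≤ ∑ i ∈ Finset.univ.filter (fun i => w ∈ hatSchema X σ i), lam i) ∧
        s = ∑ i : Fin k, lam i}).Nonempty := by
      intro hne
      exact h (hne.mono (hat_value_mem X σ (fun x hx => (hB x).mpr hx)))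
    rw [Set.not_nonempty_iff_eq_empty] at hH
    have h1 : rhoStar (hatSchema X σ) Bh = 0 := by
      simp only [rhoStar, hH, Real.sInf_empty]
    rw [h1]
    linarith [rhoStar_nonneg X B]

/-- Deleting the `Z`-variables from a tree decomposition of `Q̂_σ`. -/
noncomputable def projTD {V : Type*} [DecidableEq V] (X : Fin k → Finset V)
    (σ : Equiv.Perm (Fin k)) (Dh : TreeDecomp (hatSchema X σ)) : TreeDecomp X where
  ι := Dh.ι
  G := Dh.G
  isTree := Dh.isTree
  bag := fun t => (Dh.bag t).preimage Sum.inl Sum.inl_injective.injOn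
  covers := fun i => by
    obtain ⟨t, ht⟩ := Dh.covers (σ.symm i)
    refine ⟨t, fun x hx => Finset.mem_preimage.mpr (ht ?_)⟩
    rw [mem_hatSchema_inl, Equiv.apply_symm_apply]
    exact hx
  connected := fun x => by
    have hset : {t | x ∈ (Dh.bag t).preimage Sum.inl Sum.inl_injective.injOn}
        = {t | Sum.inl x ∈ Dh.bag t} := by
      ext t; simp [Finset.mem_preimage]
    rw [show (fun t => x ∈ (Dh.bag t).preimage Sum.inl Sum.inl_injective.injOn)
      = fun t => Sum.inl x ∈ Dh.bag t from funext fun t => by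
        simp [Finset.mem_preimage]] -- may need adjustment
    exact Dh.connected (Sum.inl x)

/-- Adding all the `Z`-variables to every bag of a tree decomposition of `Q`. -/
def liftTD {V : Type*} [DecidableEq V] (X : Fin k → Finset V)
    (σ : Equiv.Perm (Fin k)) (D : TreeDecomp X) : TreeDecomp (hatSchema X σ) where
  ι := D.ι
  G := D.G
  isTree := D.isTree
  bag := fun t => (D.bag t).image Sum.inl ∪ Finset.univ.image Sum.inr
  covers := fun i => by
    obtain ⟨t, ht⟩ := D.covers (σ i)
    exact ⟨t, Finset.union_subset_union (Finset.image_subset_image ht)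
      (Finset.image_subset_image (Finset.subset_univ _))⟩
  connected := fun w => by
    match w with
    | Sum.inl x =>
      rw [show (fun t => Sum.inl x ∈ (D.bag t).image Sum.inl ∪ Finset.univ.image Sum.inr)
        = fun t => x ∈ D.bag t from funext fun t => by simp]
      exact D.connected x
    | Sum.inr z =>
      rw [show {t | Sum.inr z ∈ (D.bag t).image Sum.inl ∪ Finset.univ.image Sum.inr}
        = (Set.univ : Set D.ι) from Set.eq_univ_of_forall fun t => by simp]
      exact (SimpleGraph.induceUnivIso D.G).preconnected_iff.mpr
        D.isTree.isConnected.preconnected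

end Aux

section Main

variable {k : ℕ} {V : Type*} [DecidableEq V] [Fintype V]

lemma fhtw_le_fhtw_hat (X : Fin k → Finset V) (σ : Equiv.Perm (Fin k)) :
    fhtw X ≤ fhtw (hatSchema X σ) := by
  apply le_csInf (fhtw_set_nonempty (hatSchema X σ))
  rintro w ⟨Dh, rfl⟩
  have h1 : fhtw X ≤ tdWidth X (projTD X σ Dh) :=
    csInf_le (fhtw_set_bddBelow X) ⟨projTD X σ Dh, rfl⟩
  refine le_trans h1 ?_
  haveI : Nonempty (projTD X σ Dh).ι := Dh.isTree.isConnected.nonempty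
  unfold tdWidth
  apply ciSup_le
  intro t
  have hb : ∀ x : V, Sum.inl x ∈ Dh.bag t ↔
      x ∈ (Dh.bag t).preimage Sum.inl Sum.inl_injective.injOn := by
    intro x; simp [Finset.mem_preimage]
  exact le_trans (rhoStar_le_hat X σ (fun x => hb x))
    (le_ciSup (f := fun t => rhoStar (hatSchema X σ) (Dh.bag t))
      (Set.Finite.bddAbove (Set.finite_range _)) t)

lemma fhtw_hat_le (X : Fin k → Finset V) (σ : Equiv.Perm (Fin k)) :
    fhtw (hatSchema X σ) ≤ fhtw X + 1 := by
  have key : ∀ w ∈ {w : ℝ | ∃ D : TreeDecomp X, tdWidth X D = w},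
      fhtw (hatSchema X σ) ≤ w + 1 := by
    rintro w ⟨D, rfl⟩
    have h1 : fhtw (hatSchema X σ) ≤ tdWidth (hatSchema X σ) (liftTD X σ D) :=
      csInf_le (fhtw_set_bddBelow (hatSchema X σ)) ⟨liftTD X σ D, rfl⟩
    refine le_trans h1 ?_
    haveI : Nonempty (liftTD X σ D).ι := D.isTree.isConnected.nonempty
    unfold tdWidth
    apply ciSup_le
    intro t
    have hb : ∀ x : V,
        Sum.inl x ∈ (D.bag t).image Sum.inl ∪ (Finset.univ : Finset (Fin k)).image Sum.inr
          ↔ x ∈ D.bag t := by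
      intro x; simp
    refine le_trans (hat_rhoStar_le X σ hb) ?_
    have : rhoStar X (D.bag t) ≤ ⨆ t : D.ι, rhoStar X (D.bag t) :=
      le_ciSup (f := fun t : D.ι => rhoStar X (D.bag t))
        (Set.Finite.bddAbove (Set.finite_range _)) t
    linarith
  have h2 : fhtw (hatSchema X σ) - 1 ≤ fhtw X :=
    le_csInf (fhtw_set_nonempty X) fun w hw => by linarith [key w hw]
  linarith

end Main

/-- **The width of the multivariate extension is between `w(Q)` and
`w(Q) + 1`**: for any query `Q` with atom schemas `X`,
`w(Q) ≤ w(Q̂) ≤ w(Q) + 1`, where `w(Q̂)` is the maximum of `w(Q̂_σ)` over all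
components `σ` of the multivariate extension `Q̂`. -/
theorem stmt_14 {k : ℕ} {V : Type*} [DecidableEq V] [Fintype V]
    (X : Fin k → Finset V) :
    fhtw X ≤ (⨆ σ : Equiv.Perm (Fin k), fhtw (hatSchema X σ)) ∧
    (⨆ σ : Equiv.Perm (Fin k), fhtw (hatSchema X σ)) ≤ fhtw X + 1 := by
  constructor
  · exact le_trans (fhtw_le_fhtw_hat X 1)
      (le_ciSup (f := fun σ : Equiv.Perm (Fin k) => fhtw (hatSchema X σ))
        (Set.Finite.bddAbove (Set.finite_range _)) 1)
  · exact ciSup_le fun σ => fhtw_hat_le X σ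
end
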